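/- Every Hadamard space satisfies Reshetnyak's quadruple comparison inequality: for all x1, x2, x3, x4 ∈ Ω, d(x1,x3)^2 + d(x2,x4)^2 ≤ d(x2,x3)^2 + d(x4,x1)^2 + 2·d(x1,x2)·d(x3,x4). -/

import Mathlib

open Metric

/-- The Non-Positive Curvature (NPC) midpoint inequality characterizing Hadamard spaces:
for every pair of points there is a midpoint making triangles thin. -/
def NPCSpace (Ω : Type*) [MetricSpace Ω] : Prop :=
  ∀ x y : Ω, ∃ m : Ω, ∀ z : Ω,
    dist z m ^ 2 ≤ (1/2 : ℝ) * dist z x ^ 2 + (1/2 : ℝ) * dist z y ^ 2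
      - (1/4 : ℝ) * dist x y ^ 2

section AuxiliaryNPC

variable {Ω : Type*} [MetricSpace Ω]

/-- Exact midpoints exist. -/
lemma npc_half (hNPC : NPCSpace Ω) (x y : Ω) :
    ∃ m : Ω, dist x m = dist x y / 2 ∧ dist m y = dist x y / 2 := by
  obtain ⟨m, hm⟩ := hNPC x y
  have h1 := hm x
  have h2 := hm y
  rw [dist_self] at h1 h2
  rw [dist_comm y x] at h2
  have hxm : dist x m ≤ dist x y / 2 := by
    nlinarith [(dist_nonneg : (0:ℝ) ≤ dist x m), (dist_nonneg : (0:ℝ) ≤ dist x y)]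
  have hym : dist y m ≤ dist x y / 2 := by
    nlinarith [(dist_nonneg : (0:ℝ) ≤ dist y m), (dist_nonneg : (0:ℝ) ≤ dist x y)]
  have htri := dist_triangle x m y
  have hmy : dist m y = dist y m := dist_comm _ _
  refine ⟨m, ?_, ?_⟩
  · linarith
  · linarith

/-- The λ = 1 quadruple (Euclidean four-point) inequality in NPC spaces. -/
lemma npc_quad (hNPC : NPCSpace Ω) (a b c d : Ω) :
    dist a c ^ 2 + dist b d ^ 2 - dist b c ^ 2 - dist a d ^ 2 ≤
      dist a b ^ 2 + dist c d ^ 2 := by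
  obtain ⟨p, hp⟩ := hNPC a c
  obtain ⟨q, hq⟩ := hNPC b d
  have h1 := hq p
  have h2 := hp b
  have h3 := hp d
  have h4 := sq_nonneg (dist p q)
  have e1 : dist p b = dist b p := dist_comm _ _
  have e2 : dist p d = dist d p := dist_comm _ _
  have e3 : dist b a = dist a b := dist_comm _ _
  have e4 : dist d a = dist a d := dist_comm _ _
  have e5 : dist d c = dist c d := dist_comm _ _
  rw [e1, e2] at h1
  rw [e3] at h2
  rw [e4, e5] at h3
  linarith

/-- Triangle-inequality bound along a chain. -/
lemma chain_dist (g : ℕ → Ω) (K : ℕ) (s : ℝ)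
    (h : ∀ i, i < K → dist (g i) (g (i+1)) ≤ s) :
    ∀ n a, a + n ≤ K → dist (g a) (g (a + n)) ≤ n * s := by
  intro n
  induction n with
  | zero => intro a _; simp
  | succ m ih =>
      intro a ha
      have h1 := ih a (by omega)
      have h2 := h (a+m) (by omega)
      have key : dist (g a) (g (a+(m+1))) ≤ dist (g a) (g (a+m)) + dist (g (a+m)) (g (a+m+1)) := by
        have e : a + (m+1) = (a+m)+1 := by omega
        rw [e]
        exact dist_triangle _ _ _
      have : ((m:ℝ)+1) * s = m * s + s := by ring
      push_cast
      linarith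

/-- Dyadic chains with exactly equal spacing. -/
lemma dyadic_chain (mid : Ω → Ω → Ω)
    (hm1 : ∀ u v, dist u (mid u v) = dist u v / 2)
    (hm2 : ∀ u v, dist (mid u v) v = dist u v / 2)
    (x y : Ω) : ∀ k : ℕ, ∃ g : ℕ → Ω, g 0 = x ∧ g (2^k) = y ∧
      ∀ i, i < 2^k → dist (g i) (g (i+1)) = dist x y / 2^k := by
  intro k
  induction k with
  | zero =>
      refine ⟨fun i => if i = 0 then x else y, by simp, by simp, ?_⟩
      intro i hi
      interval_cases i
      simp
  | succ k ih =>
      obtain ⟨g, hg0, hgN, hgd⟩ := ih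
      refine ⟨fun n => if n % 2 = 0 then g (n/2) else mid (g (n/2)) (g (n/2 + 1)), ?_, ?_, ?_⟩
      · simp [hg0]
      · have hmod : 2^(k+1) % 2 = 0 := by
          have : (2:ℕ)^(k+1) = 2^k * 2 := by rw [pow_succ]
          omega
        have hdiv : 2^(k+1) / 2 = 2^k := by
          have : (2:ℕ)^(k+1) = 2^k * 2 := by rw [pow_succ]
          omega
        simp only [hmod, if_pos rfl, hdiv]
        · exact hgN
      · intro i hi
        have hpow : (2:ℕ)^(k+1) = 2^k * 2 := by rw [pow_succ]
        have hhalf : dist x y / 2^(k+1) = (dist x y / 2^k) / 2 := by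
          rw [pow_succ]; ring
        rcases Nat.mod_two_eq_zero_or_one i with he | ho
        · -- i even
          have h1 : (i+1) % 2 = 1 := by omega
          have h2 : (i+1) / 2 = i / 2 := by omega
          have hj : i / 2 < 2^k := by omega
          simp only [he, if_pos rfl, h1, h2]
          norm_num
          rw [hm1, hgd (i/2) hj, hhalf]
        · -- i odd
          have h1 : (i+1) % 2 = 0 := by omega
          have h2 : (i+1) / 2 = i / 2 + 1 := by omega
          have hj : i / 2 < 2^k := by omega
          simp only [ho, h1, h2]
          norm_num
          rw [hm2, hgd (i/2) hj, hhalf]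

/-- Chains with `M` pieces of spacing at most `d/M + d/2^k`. -/
lemma chain_M (mid : Ω → Ω → Ω)
    (hm1 : ∀ u v, dist u (mid u v) = dist u v / 2)
    (hm2 : ∀ u v, dist (mid u v) v = dist u v / 2)
    (x y : Ω) (M k : ℕ) (hM : 1 ≤ M) :
    ∃ p : ℕ → Ω, p 0 = x ∧ p M = y ∧
      ∀ i, i < M → dist (p i) (p (i+1)) ≤ dist x y / M + dist x y / 2^k := by
  obtain ⟨g, hg0, hgN, hgd⟩ := dyadic_chain mid hm1 hm2 x y k
  set c : ℕ := 2^k / M + 1 with hc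
  have hcge : 2^k < M * c := by
    have hd := Nat.div_add_mod (2^k) M
    have hr : 2^k % M < M := Nat.mod_lt _ (by omega)
    have : M * c = M * (2^k / M) + M := by rw [hc]; ring
    omega
  clear_value c
  refine ⟨fun i => g (min (i*c) (2^k)), by simpa using hg0, ?_, ?_⟩
  · have hMc : 2^k ≤ M * c := by
      have hd := Nat.div_add_mod (2^k) M
      have hr : 2^k % M < M := Nat.mod_lt _ (by omega)
      have : M * c = M * (2^k / M) + M := by rw [hc]; ring
      omega
    have : min (M*c) (2^k) = 2^k := min_eq_right hMc
    simp only [this]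
    exact hgN
  · intro i hi
    set a : ℕ := min (i*c) (2^k) with ha
    set b : ℕ := min ((i+1)*c) (2^k) with hb
    have hic : (i+1)*c = i*c + c := by ring
    have hab : a ≤ b := by
      rw [ha, hb]; omega
    have hbK : b ≤ 2^k := by rw [hb]; omega
    have hba : b - a ≤ c := by rw [ha, hb]; omega
    have hgd' : ∀ j, j < 2^k → dist (g j) (g (j+1)) ≤ dist x y / 2^k := by
      intro j hj; rw [hgd j hj]
    have hchain := chain_dist g (2^k) (dist x y / 2^k) hgd' (b - a) a (by omega)
    have heq : a + (b - a) = b := by omega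
    rw [heq] at hchain
    have hs : (0:ℝ) ≤ dist x y / 2^k := by positivity
    have hcast : ((b - a : ℕ):ℝ) ≤ (c:ℝ) := by exact_mod_cast hba
    have h1 : dist (g a) (g b) ≤ (c:ℝ) * (dist x y / 2^k) :=
      le_trans hchain (mul_le_mul_of_nonneg_right hcast hs)
    have h2 : (c:ℝ) ≤ (2^k : ℝ)/M + 1 := by
      rw [hc]
      push_cast
      have := Nat.cast_div_le (α := ℝ) (m := 2^k) (n := M)
      push_cast at this
      linarith
    have h3 : ((2^k:ℝ)/M + 1) * (dist x y / 2^k) = dist x y / M + dist x y / 2^k := by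
      have hk : (2:ℝ)^k ≠ 0 := by positivity
      have hM' : (M:ℝ) ≠ 0 := by
        have : (0:ℝ) < M := by exact_mod_cast hM
        linarith
      field_simp
    calc dist (g a) (g b) ≤ (c:ℝ) * (dist x y / 2^k) := h1
      _ ≤ ((2^k:ℝ)/M + 1) * (dist x y / 2^k) := mul_le_mul_of_nonneg_right h2 hs
      _ = dist x y / M + dist x y / 2^k := h3

open Finset in
/-- Double telescoping of the quadrilateral cocycle. -/
lemma tele (p q : ℕ → Ω) (M N : ℕ) :
    ∑ i ∈ range M, ∑ j ∈ range N,
      (dist (p i) (q j)^2 + dist (p (i+1)) (q (j+1))^2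
        - dist (p (i+1)) (q j)^2 - dist (p i) (q (j+1))^2)
    = dist (p 0) (q 0)^2 + dist (p M) (q N)^2
        - dist (p M) (q 0)^2 - dist (p 0) (q N)^2 := by
  have inner : ∀ a a' : Ω,
      ∑ j ∈ range N, (dist a (q j)^2 + dist a' (q (j+1))^2
        - dist a' (q j)^2 - dist a (q (j+1))^2)
      = (dist a (q 0)^2 - dist a' (q 0)^2) - (dist a (q N)^2 - dist a' (q N)^2) := by
    intro a a'
    have h := Finset.sum_range_sub' (fun j => dist a (q j)^2 - dist a' (q j)^2) N
    rw [← h]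
    apply Finset.sum_congr rfl
    intro j _
    ring
  have h2 : ∑ i ∈ range M, ∑ j ∈ range N,
      (dist (p i) (q j)^2 + dist (p (i+1)) (q (j+1))^2
        - dist (p (i+1)) (q j)^2 - dist (p i) (q (j+1))^2)
      = ∑ i ∈ range M, ((dist (p i) (q 0)^2 - dist (p i) (q N)^2)
          - (dist (p (i+1)) (q 0)^2 - dist (p (i+1)) (q N)^2)) := by
    apply Finset.sum_congr rfl
    intro i _
    rw [inner (p i) (p (i+1))]
    ring
  rw [h2, Finset.sum_range_sub' (fun i => dist (p i) (q 0)^2 - dist (p i) (q N)^2) M]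
  ring

open Finset in
/-- Grid subdivision bound. -/
lemma main_bound (hNPC : NPCSpace Ω) (x1 x2 x3 x4 : Ω) (M N k : ℕ)
    (hM : 1 ≤ M) (hN : 1 ≤ N) :
    dist x1 x3 ^ 2 + dist x2 x4 ^ 2 - dist x2 x3 ^ 2 - dist x1 x4 ^ 2 ≤
      (M:ℝ) * N * ((dist x1 x2 / M + dist x1 x2 / 2^k)^2
        + (dist x3 x4 / N + dist x3 x4 / 2^k)^2) := by
  choose mid hm1 hm2 using npc_half hNPC
  obtain ⟨p, hp0, hpM, hpd⟩ := chain_M mid hm1 hm2 x1 x2 M k hM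
  obtain ⟨q, hq0, hqN, hqd⟩ := chain_M mid hm1 hm2 x3 x4 N k hN
  set bp : ℝ := dist x1 x2 / M + dist x1 x2 / 2^k with hbp
  set bq : ℝ := dist x3 x4 / N + dist x3 x4 / 2^k with hbq
  have key : ∑ i ∈ range M, ∑ j ∈ range N,
      (dist (p i) (q j)^2 + dist (p (i+1)) (q (j+1))^2
        - dist (p (i+1)) (q j)^2 - dist (p i) (q (j+1))^2)
      ≤ ∑ i ∈ range M, ∑ j ∈ range N, (bp^2 + bq^2) := by
    apply Finset.sum_le_sum
    intro i hi
    apply Finset.sum_le_sum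
    intro j hj
    have hcell := npc_quad hNPC (p i) (p (i+1)) (q j) (q (j+1))
    have hbpi : dist (p i) (p (i+1))^2 ≤ bp^2 := by
      have := hpd i (mem_range.mp hi)
      have h0 : (0:ℝ) ≤ dist (p i) (p (i+1)) := dist_nonneg
      nlinarith
    have hbqj : dist (q j) (q (j+1))^2 ≤ bq^2 := by
      have := hqd j (mem_range.mp hj)
      have h0 : (0:ℝ) ≤ dist (q j) (q (j+1)) := dist_nonneg
      nlinarith
    linarith
  rw [tele p q M N] at key
  rw [hp0, hpM, hq0, hqN] at key
  have hconst : ∑ i ∈ range M, ∑ j ∈ range N, (bp^2 + bq^2) = (M:ℝ)*N*(bp^2+bq^2) := by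
    simp [Finset.sum_const, card_range]
    ring
  rw [hconst] at key
  exact key

open Filter Topology in
/-- Rational-ratio AM-GM form, obtained by letting the dyadic depth tend to infinity. -/
lemma rat_bound (hNPC : NPCSpace Ω) (x1 x2 x3 x4 : Ω) (M N : ℕ)
    (hM : 1 ≤ M) (hN : 1 ≤ N) :
    dist x1 x3 ^ 2 + dist x2 x4 ^ 2 - dist x2 x3 ^ 2 - dist x1 x4 ^ 2 ≤
      (N:ℝ) * dist x1 x2 ^ 2 / M + (M:ℝ) * dist x3 x4 ^ 2 / N := by
  set P := dist x1 x2 with hP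
  set L := dist x3 x4 with hL
  have hM0 : (0:ℝ) < M := by exact_mod_cast hM
  have hN0 : (0:ℝ) < N := by exact_mod_cast hN
  have hhalf : Tendsto (fun k : ℕ => ((1:ℝ)/2)^k) atTop (𝓝 0) := by
    apply tendsto_pow_atTop_nhds_zero_of_lt_one <;> norm_num
  have hinv : ∀ d : ℝ, Tendsto (fun k : ℕ => d / 2^k) atTop (𝓝 0) := by
    intro d
    have : (fun k : ℕ => d / 2^k) = fun k : ℕ => d * ((1:ℝ)/2)^k := by
      funext k
      rw [div_pow, one_pow]
      ring
    rw [this]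
    simpa using hhalf.const_mul d
  have hlim : Tendsto (fun k : ℕ => (M:ℝ) * N * ((P / M + P / 2^k)^2
      + (L / N + L / 2^k)^2)) atTop
      (𝓝 ((M:ℝ) * N * ((P / M + 0)^2 + (L / N + 0)^2))) := by
    exact (((tendsto_const_nhds.add (hinv P)).pow 2).add
      ((tendsto_const_nhds.add (hinv L)).pow 2)).const_mul _
  have hle := ge_of_tendsto' hlim
    (fun k => main_bound hNPC x1 x2 x3 x4 M N k hM hN)
  have heq : (M:ℝ) * N * ((P / M + 0)^2 + (L / N + 0)^2)
      = (N:ℝ) * P ^ 2 / M + (M:ℝ) * L ^ 2 / N := by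
    field_simp
    ring
  rw [heq] at hle
  exact hle

end AuxiliaryNPC

/-- Reshetnyak's quadruple comparison: every Hadamard space
(complete metric space satisfying the NPC inequality) satisfies
`d(x1,x3)^2 + d(x2,x4)^2 ≤ d(x2,x3)^2 + d(x4,x1)^2 + 2 d(x1,x2) d(x3,x4)`. -/
theorem reshetnyak_quadruple_comparison
    {Ω : Type*} [MetricSpace Ω] [CompleteSpace Ω] (hNPC : NPCSpace Ω)
    (x1 x2 x3 x4 : Ω) :
    dist x1 x3 ^ 2 + dist x2 x4 ^ 2 ≤
      dist x2 x3 ^ 2 + dist x4 x1 ^ 2 + 2 * dist x1 x2 * dist x3 x4 := by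
  set P := dist x1 x2 with hP
  set L := dist x3 x4 with hL
  have hPnn : (0:ℝ) ≤ P := dist_nonneg
  have hLnn : (0:ℝ) ≤ L := dist_nonneg
  have hQ : dist x1 x3 ^ 2 + dist x2 x4 ^ 2 - dist x2 x3 ^ 2 - dist x1 x4 ^ 2
      ≤ 2 * P * L := by
    apply le_of_forall_pos_le_add
    intro ε hε
    rcases eq_or_lt_of_le hLnn with hL0 | hLpos
    · -- L = 0
      obtain ⟨n, hn⟩ := exists_nat_gt (P^2/ε)
      have hn1 : 1 ≤ n := by
        by_contra h
        push_neg at h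
        interval_cases n
        simp at hn
        have := div_nonneg (sq_nonneg P) (le_of_lt hε)
        linarith
      have hn0 : (0:ℝ) < n := by exact_mod_cast hn1
      have hb := rat_bound hNPC x1 x2 x3 x4 n 1 hn1 le_rfl
      rw [← hP, ← hL] at hb
      rw [← hL0] at hb
      push_cast at hb
      have h1 : (1:ℝ) * P^2 / n + (n:ℝ) * 0^2 / 1 = P^2/n := by ring
      rw [h1] at hb
      have h2 : P^2/n < ε := by
        rw [div_lt_iff₀ hn0]
        have h3 : (P^2/ε)*ε < ↑n * ε := mul_lt_mul_of_pos_right hn hε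
        have h4 : (P^2/ε)*ε = P^2 := by field_simp
        linarith
      have : 2*P*L = 0 := by rw [← hL0]; ring
      linarith
    · -- L > 0
      obtain ⟨n, hn⟩ := exists_nat_gt (L^2/ε)
      have hn1 : 1 ≤ n := by
        by_contra h
        push_neg at h
        interval_cases n
        simp at hn
        have := div_nonneg (sq_nonneg L) (le_of_lt hε)
        linarith
      have hn0 : (0:ℝ) < n := by exact_mod_cast hn1
      set c : ℕ := ⌈(n:ℝ) * P / L⌉₊ with hc
      set M : ℕ := max 1 c with hM
      have hM1 : 1 ≤ M := le_max_left _ _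
      have hM0 : (0:ℝ) < M := by exact_mod_cast hM1
      have hy : (0:ℝ) ≤ (n:ℝ) * P / L := by positivity
      have hMge : (n:ℝ) * P / L ≤ (M:ℝ) := by
        have h1 : (n:ℝ) * P / L ≤ (c:ℝ) := Nat.le_ceil _
        have h2 : (c:ℝ) ≤ (M:ℝ) := by exact_mod_cast le_max_right 1 c
        linarith
      have hMle : (M:ℝ) ≤ (n:ℝ) * P / L + 1 := by
        rcases Nat.eq_zero_or_pos c with h0 | hpos
        · have : M = 1 := by rw [hM, h0]; simp
          rw [this]
          push_cast
          linarith
        · have : M = c := by rw [hM]; omega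
          rw [this]
          have := Nat.ceil_lt_add_one hy
          rw [← hc] at this
          linarith
      have hb := rat_bound hNPC x1 x2 x3 x4 M n hM1 hn1
      rw [← hP, ← hL] at hb
      have bound1 : (n:ℝ) * P^2 / M ≤ P * L := by
        rw [div_le_iff₀ hM0]
        have h := mul_le_mul_of_nonneg_left hMge (mul_nonneg hPnn hLnn)
        have e : P*L*((n:ℝ)*P/L) = (n:ℝ)*P^2 := by field_simp
        rw [e] at h
        linarith [h]
      have bound2 : (M:ℝ) * L^2 / n ≤ P * L + ε := by
        rw [div_le_iff₀ hn0]
        have h := mul_le_mul_of_nonneg_right hMle (sq_nonneg L)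
        have e : ((n:ℝ)*P/L + 1) * L^2 = (n:ℝ)*P*L + L^2 := by field_simp
        rw [e] at h
        have hLe : L^2 < ε * n := by
          calc L^2 = (L^2/ε) * ε := by field_simp
          _ < n * ε := mul_lt_mul_of_pos_right hn hε
          _ = ε * n := by ring
        nlinarith
      calc dist x1 x3 ^ 2 + dist x2 x4 ^ 2 - dist x2 x3 ^ 2 - dist x1 x4 ^ 2
          ≤ (n:ℝ) * P^2 / M + (M:ℝ) * L^2 / n := hb
        _ ≤ P * L + (P * L + ε) := add_le_add bound1 bound2
        _ = 2 * P * L + ε := by ring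
  have e41 : dist x4 x1 = dist x1 x4 := dist_comm _ _
  rw [e41]
  linarith
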